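/- With α_{r,n}(t) := ∑_{q=0}^∞ C(r + kq + n, n) · ε^q · e^{-iqt} · z₁^{r+kq} · z₂^n in the Drury-Arveson space H²₂, the element α_{r,n}(t) is orthogonal to g·(z₁^k − ε·e^{it}) for every polynomial g ∈ ℂ[z₁, z₂]; that is, α_{r,n}(t) lies in the orthogonal complement of the closure of the ideal ⟨z₁^k − ε·e^{it}⟩ in H²₂. -/

import Mathlib

noncomputable section

/-- The Drury-Arveson space `H²₂`, modeled as `ℓ²(ℕ × ℕ)` via the orthonormal basis
of normalized monomials. -/
abbrev DruryArveson2 : Type := lp (fun _ : ℕ × ℕ => ℂ) 2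

/-- The monomial `z₁^m z₂^n ∈ H²₂`; it has squared norm `ω_{m,n} = C(m+n, m)⁻¹`,
and distinct monomials are orthogonal. -/
def mono (m n : ℕ) : DruryArveson2 :=
  (Real.sqrt (((m + n).choose m : ℝ)⁻¹) : ℂ) • lp.single 2 (m, n) 1

/-- `α_{r,n}(t) = ∑_q C(r+kq+n, n) ε^q e^{-iqt} z₁^{r+kq} z₂^n`. -/
def alphaDA (k r n : ℕ) (ε t : ℝ) : DruryArveson2 :=
  ∑' q : ℕ, (((r + k * q + n).choose n : ℂ) * ε ^ q * Complex.exp (-(Complex.I * q * t))) •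
    mono (r + k * q) n

lemma inner_mono_mono (m n m' n' : ℕ) :
    (inner ℂ (mono m n) (mono m' n') : ℂ) =
      if (m, n) = (m', n') then ((((m + n).choose m : ℝ)⁻¹ : ℂ)) else 0 := by
  unfold mono
  rw [inner_smul_left, inner_smul_right, lp.inner_single_left, lp.single_apply]
  by_cases h : (m, n) = (m', n')
  · cases h
    rw [if_pos rfl, Pi.single_eq_same]
    simp only [Complex.conj_ofReal, RCLike.inner_apply, map_one, mul_one]
    rw [← Complex.ofReal_mul, Real.mul_self_sqrt (by positivity)]
    push_cast; ring
  · rw [if_neg h, Pi.single_apply, if_neg h]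
    simp

lemma hA (k r n : ℕ) (ε t : ℝ)
    (hS : Summable (fun q : ℕ =>
      (((r + k * q + n).choose n : ℂ) * ε ^ q * Complex.exp (-(Complex.I * q * t))) •
        mono (r + k * q) n)) (M N : ℕ) :
    (inner ℂ (alphaDA k r n ε t) (mono M N) : ℂ) =
      ∑' q : ℕ, (if (r + k * q, n) = (M, N) then
        (((r + k * q + n).choose n : ℂ) * ε ^ q * Complex.exp (Complex.I * q * t)) *
          (((M + N).choose M : ℝ)⁻¹ : ℂ) else 0) := by
  rw [← inner_conj_symm]
  unfold alphaDA
  have h1 : (inner ℂ (mono M N) (∑' q : ℕ,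
      (((r + k * q + n).choose n : ℂ) * ε ^ q * Complex.exp (-(Complex.I * q * t))) •
        mono (r + k * q) n) : ℂ)
      = ∑' q : ℕ, (inner ℂ (mono M N)
          ((((r + k * q + n).choose n : ℂ) * ε ^ q * Complex.exp (-(Complex.I * q * t))) •
            mono (r + k * q) n) : ℂ) :=
    (hS.hasSum.mapL (innerSL ℂ (mono M N))).tsum_eq.symm
  rw [h1]
  rw [show (starRingEnd ℂ) (∑' q : ℕ, (inner ℂ (mono M N)
      ((((r + k * q + n).choose n : ℂ) * ε ^ q * Complex.exp (-(Complex.I * q * t))) •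
        mono (r + k * q) n) : ℂ)) = star (∑' q : ℕ, (inner ℂ (mono M N)
      ((((r + k * q + n).choose n : ℂ) * ε ^ q * Complex.exp (-(Complex.I * q * t))) •
        mono (r + k * q) n) : ℂ)) from rfl, tsum_star]
  refine tsum_congr fun q => ?_
  rw [inner_smul_right]
  rw [show (star (((r + k * q + n).choose n : ℂ) * ε ^ q * Complex.exp (-(Complex.I * q * t)) *
      (inner ℂ (mono M N) (mono (r + k * q) n) : ℂ)) : ℂ)
    = (starRingEnd ℂ) (((r + k * q + n).choose n : ℂ) * ε ^ q *
        Complex.exp (-(Complex.I * q * t))) *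
      (starRingEnd ℂ) (inner ℂ (mono M N) (mono (r + k * q) n) : ℂ) from by
      simp [star_mul']]
  rw [inner_conj_symm, inner_mono_mono]
  rw [map_mul, map_mul, ← Complex.exp_conj]
  simp only [map_neg, map_mul, Complex.conj_I, Complex.conj_natCast, Complex.conj_ofReal,
    map_pow, neg_mul, neg_neg, mul_ite, mul_zero]
  split_ifs with h
  · rw [Prod.mk.injEq] at h
    rw [h.1, h.2]
  · rfl

lemma key (k r n : ℕ) (hk : 1 ≤ k) (hrk : r < k) (ε t : ℝ)
    (hS : Summable (fun q : ℕ =>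
      (((r + k * q + n).choose n : ℂ) * ε ^ q * Complex.exp (-(Complex.I * q * t))) •
        mono (r + k * q) n)) (M N : ℕ) :
    (inner ℂ (alphaDA k r n ε t) (mono (M + k) N) : ℂ)
      = ((ε : ℂ) * Complex.exp (Complex.I * t)) *
        inner ℂ (alphaDA k r n ε t) (mono M N) := by
  rw [hA k r n ε t hS, hA k r n ε t hS]
  by_cases hex : ∃ q0, r + k * q0 = M ∧ n = N
  · obtain ⟨q0, hq0, rfl⟩ := hex
    have e1 : r + k * (q0 + 1) = M + k := by
      rw [mul_add, mul_one, ← add_assoc, hq0]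
    rw [tsum_eq_single (q0 + 1) (by
      intro b hb
      rw [if_neg]
      intro h
      rw [Prod.mk.injEq] at h
      have h1 : r + k * b = M + k := h.1
      have h2 : k * b = k * q0 + k := by omega
      have h3 : k * b = k * (q0 + 1) := by rw [h2]; ring
      exact hb (Nat.eq_of_mul_eq_mul_left hk h3)),
      tsum_eq_single q0 (by
      intro b hb
      rw [if_neg]
      intro h
      rw [Prod.mk.injEq] at h
      have h1 : r + k * b = M := h.1
      have h3 : k * b = k * q0 := by omega
      exact hb (Nat.eq_of_mul_eq_mul_left hk h3))]
    rw [if_pos (by rw [Prod.mk.injEq]; exact ⟨e1, rfl⟩),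
      if_pos (by rw [Prod.mk.injEq]; exact ⟨hq0, rfl⟩)]
    rw [e1, hq0]
    have c1 : (M + k + n).choose (M + k) = (M + k + n).choose n := Nat.choose_symm_add
    have c2 : (M + n).choose M = (M + n).choose n := Nat.choose_symm_add
    rw [c1, c2]
    have hne1 : (((M + k + n).choose n : ℂ)) ≠ 0 := by
      exact_mod_cast (Nat.choose_pos (show n ≤ M + k + n by omega)).ne'
    have hne2 : (((M + n).choose n : ℂ)) ≠ 0 := by
      exact_mod_cast (Nat.choose_pos (show n ≤ M + n by omega)).ne'
    have eexp : Complex.exp (Complex.I * ((q0 : ℂ) + 1) * t)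
        = Complex.exp (Complex.I * t) * Complex.exp (Complex.I * q0 * t) := by
      rw [← Complex.exp_add]; congr 1; ring
    push_cast
    rw [eexp, pow_succ]
    field_simp [hne1, hne2]
  · have z1 : ∀ q : ℕ, (if (r + k * q, n) = (M + k, N) then
        (((r + k * q + n).choose n : ℂ) * ε ^ q * Complex.exp (Complex.I * q * t)) *
          ((((M + k) + N).choose (M + k) : ℝ)⁻¹ : ℂ) else 0) = 0 := by
      intro q
      rw [if_neg]
      intro h
      rw [Prod.mk.injEq] at h
      obtain ⟨h1, h2⟩ := h
      match q with
      | 0 => omega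
      | q' + 1 =>
        refine hex ⟨q', ?_, h2⟩
        have : k * (q' + 1) = k * q' + k := by ring
        omega
    have z2 : ∀ q : ℕ, (if (r + k * q, n) = (M, N) then
        (((r + k * q + n).choose n : ℂ) * ε ^ q * Complex.exp (Complex.I * q * t)) *
          (((M + N).choose M : ℝ)⁻¹ : ℂ) else 0) = 0 := by
      intro q
      rw [if_neg]
      intro h
      rw [Prod.mk.injEq] at h
      exact hex ⟨q, h.1, h.2⟩
    rw [tsum_congr z1, tsum_congr z2]
    simp

/-- `α_{r,n}(t)` is orthogonal to `g·(z₁^k − ε e^{it})` for every polynomial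
`g = ∑ c_{M,N} z₁^M z₂^N`; i.e. it lies in the orthogonal complement of the closure of
the ideal `⟨z₁^k − ε e^{it}⟩` in `H²₂`. -/
theorem statement4 (k : ℕ) (hk : 1 ≤ k) (ε t : ℝ) (hε0 : 0 < ε) (hε1 : ε < 1)
    (r n : ℕ) (hr : r ≤ k - 1) (c : (ℕ × ℕ) →₀ ℂ) :
    (inner ℂ (alphaDA k r n ε t)
      (c.sum fun p v => v •
        (mono (p.1 + k) p.2 - ((ε : ℂ) * Complex.exp (Complex.I * t)) • mono p.1 p.2)) : ℂ)
      = 0 := by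
  by_cases hS : Summable (fun q : ℕ =>
      (((r + k * q + n).choose n : ℂ) * ε ^ q * Complex.exp (-(Complex.I * q * t))) •
        mono (r + k * q) n)
  · rw [Finsupp.sum, inner_sum]
    refine Finset.sum_eq_zero fun p _ => ?_
    rw [inner_smul_right, inner_sub_right, inner_smul_right,
      key k r n hk (by omega) ε t hS p.1 p.2, sub_self, mul_zero]
  · unfold alphaDA
    rw [tsum_eq_zero_of_not_summable hS]
    simp

end
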